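/- The sign function sgn on the coordinate ring A = F_q[t,y] of an elliptic curve, defined by sending a nonzero element a = Σ a_i t^i + Σ b_i t^i y to the coefficient of its term of highest degree (where deg t = 2 and deg y = 3), is multiplicative: sgn(ab) = sgn(a)·sgn(b) for all nonzero a, b ∈ A. -/
import Mathlib

open Polynomial
open scoped Classical

/-- The sign (leading coefficient for the grading `deg t = 2`, `deg y = 3`) of the
element `f(t) + g(t)·y` of the coordinate ring `A = F_q[t,y]`, written in the canonical
form with `f, g ∈ F_q[t]`. -/

noncomputable def ecSgn {F : Type*} [Field F] (f g : F[X]) : F :=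
  if g = 0 then f.leadingCoeff
  else if 3 + 2 * g.natDegree < 2 * f.natDegree then f.leadingCoeff else g.leadingCoeff

section helpers

variable {F : Type*} [Field F]

private lemma ecSgn_left {f g : F[X]}
    (h : g = 0 ∨ 3 + 2 * g.natDegree < 2 * f.natDegree) :
    ecSgn f g = f.leadingCoeff := by
  rcases eq_or_ne g 0 with hg | hg
  · simp [ecSgn, hg]
  · rw [ecSgn, if_neg hg, if_pos (h.resolve_left hg)]

private lemma ecSgn_right {f g : F[X]} (hg : g ≠ 0)
    (h : ¬(3 + 2 * g.natDegree < 2 * f.natDegree)) :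
    ecSgn f g = g.leadingCoeff := by
  rw [ecSgn, if_neg hg, if_neg h]

private lemma deg_lt' {p q : F[X]} (hq : q ≠ 0)
    (h : p ≠ 0 → p.natDegree < q.natDegree) : p.degree < q.degree := by
  rcases eq_or_ne p 0 with hp | hp
  · rw [hp, degree_zero, degree_eq_natDegree hq]
    exact WithBot.bot_lt_coe _
  · rw [degree_eq_natDegree hp, degree_eq_natDegree hq]
    exact_mod_cast h hp

private lemma deg_le' {p : F[X]} {k : ℕ} (h : p ≠ 0 → p.natDegree ≤ k) :
    p.degree ≤ (k : WithBot ℕ) := by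
  rcases eq_or_ne p 0 with hp | hp
  · rw [hp, degree_zero]; exact bot_le
  · exact natDegree_le_iff_degree_le.mp (h hp)

private lemma key2 {p q : F[X]} {M : ℕ}
    (hp : p ≠ 0 → p.natDegree ≤ M) (hq : q ≠ 0 → q.natDegree ≤ M) :
    (p + q).natDegree ≤ M :=
  natDegree_le_iff_degree_le.mpr
    (le_trans (degree_add_le _ _) (max_le (deg_le' hp) (deg_le' hq)))

private lemma key3 {p q r : F[X]} {M : ℕ}
    (hp : p ≠ 0 → p.natDegree + 2 ≤ M) (hq : q ≠ 0 → q.natDegree + 2 ≤ M)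
    (hr : r ≠ 0 → r.natDegree + 2 ≤ M) (hne : p + q - r ≠ 0) :
    (p + q - r).natDegree + 2 ≤ M := by
  have hM : 2 ≤ M := by
    by_contra hM
    apply hne
    have hp0 : p = 0 := by by_contra h; exact hM (le_trans (by omega) (hp h))
    have hq0 : q = 0 := by by_contra h; exact hM (le_trans (by omega) (hq h))
    have hr0 : r = 0 := by by_contra h; exact hM (le_trans (by omega) (hr h))
    simp [hp0, hq0, hr0]
  have hdeg : (p + q - r).degree ≤ ((M - 2 : ℕ) : WithBot ℕ) := by
    refine le_trans (degree_sub_le _ _) (max_le (le_trans (degree_add_le _ _)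
      (max_le (deg_le' ?_) (deg_le' ?_))) (deg_le' ?_)) <;>
      · intro h; first
          | (have := hp h; omega)
          | (have := hq h; omega)
          | (have := hr h; omega)
  have := natDegree_le_iff_degree_le.mpr hdeg
  omega

private lemma lc3_left {p q r : F[X]} (hq : q.degree < p.degree)
    (hr : r.degree < p.degree) :
    (p + q - r).leadingCoeff = p.leadingCoeff ∧ (p + q - r).degree = p.degree := by
  have h1 : (p + q).degree = p.degree := degree_add_eq_left_of_degree_lt hq
  have h2 : (-r).degree < (p + q).degree := by rw [degree_neg, h1]; exact hr
  constructor
  · rw [sub_eq_add_neg, leadingCoeff_add_of_degree_lt' h2,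
      leadingCoeff_add_of_degree_lt' hq]
  · rw [sub_eq_add_neg, degree_add_eq_left_of_degree_lt h2, h1]

private lemma lc3_mid {p q r : F[X]} (hp : p.degree < q.degree)
    (hr : r.degree < q.degree) :
    (p + q - r).leadingCoeff = q.leadingCoeff ∧ (p + q - r).degree = q.degree := by
  have h1 : (p + q).degree = q.degree := degree_add_eq_right_of_degree_lt hp
  have h2 : (-r).degree < (p + q).degree := by rw [degree_neg, h1]; exact hr
  constructor
  · rw [sub_eq_add_neg, leadingCoeff_add_of_degree_lt' h2,
      leadingCoeff_add_of_degree_lt hp]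
  · rw [sub_eq_add_neg, degree_add_eq_left_of_degree_lt h2, h1]

end helpers

/-- the sign function on the coordinate ring `A = F_q[t,y]` of the elliptic
curve `y² + c₁ty + c₃y = t³ + c₂t² + c₄t + c₆` is multiplicative.  Elements of `A` are
represented as pairs `(f,g)` standing for `f(t) + g(t)·y`; the product of `(f,g)` and
`(f',g')` is `(f·f' + g·g'·(X³+c₂X²+c₄X+c₆), f·g' + g·f' - g·g'·(c₁X + c₃))`, using the
Weierstrass relation to rewrite `y²`. -/
theorem stmt_2 {F : Type*} [Field F] [Fintype F] (c₁ c₂ c₃ c₄ c₆ : F)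
    (f g f' g' : F[X]) (hfg : ¬(f = 0 ∧ g = 0)) (hfg' : ¬(f' = 0 ∧ g' = 0)) :
    ecSgn (f * f' + g * g' * (X ^ 3 + C c₂ * X ^ 2 + C c₄ * X + C c₆))
        (f * g' + g * f' - g * g' * (C c₁ * X + C c₃)) =
      ecSgn f g * ecSgn f' g' := by
  set E : F[X] := X ^ 3 + C c₂ * X ^ 2 + C c₄ * X + C c₆ with hE
  set L : F[X] := C c₁ * X + C c₃ with hL
  have hEm : E.Monic := by rw [hE]; monicity!
  have hEnd : E.natDegree = 3 := by rw [hE]; compute_degree!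
  have hEne : E ≠ 0 := hEm.ne_zero
  have hLnd : L.natDegree ≤ 1 := by rw [hL]; compute_degree
  -- case analysis data for a pair
  have pairCases : ∀ (a b : F[X]), ¬(a = 0 ∧ b = 0) →
      (a ≠ 0 ∧ (b = 0 ∨ 3 + 2 * b.natDegree < 2 * a.natDegree)) ∨
      (b ≠ 0 ∧ 2 * a.natDegree ≤ 3 + 2 * b.natDegree) := by
    intro a b hab
    by_cases hb : b = 0
    · exact Or.inl ⟨fun ha => hab ⟨ha, hb⟩, Or.inl hb⟩
    by_cases hc : 3 + 2 * b.natDegree < 2 * a.natDegree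
    · refine Or.inl ⟨fun ha => ?_, Or.inr hc⟩
      rw [ha, natDegree_zero] at hc; omega
    · exact Or.inr ⟨hb, by omega⟩
  rcases pairCases f g hfg with ⟨hf, Hg⟩ | ⟨hg, Hf⟩ <;>
    rcases pairCases f' g' hfg' with ⟨hf', Hg'⟩ | ⟨hg', Hf'⟩
  · -- EE case
    have hff' : f * f' ≠ 0 := mul_ne_zero hf hf'
    have hlt : (g * g' * E).degree < (f * f').degree := by
      apply deg_lt' hff'
      intro h
      have hgne : g ≠ 0 := left_ne_zero_of_mul (left_ne_zero_of_mul h)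
      have hg'ne : g' ≠ 0 := right_ne_zero_of_mul (left_ne_zero_of_mul h)
      rw [natDegree_mul (mul_ne_zero hgne hg'ne) hEne, natDegree_mul hgne hg'ne,
        hEnd, natDegree_mul hf hf']
      have h1 := Hg.resolve_left hgne
      have h2 := Hg'.resolve_left hg'ne
      omega
    have lcF : (f * f' + g * g' * E).leadingCoeff = f.leadingCoeff * f'.leadingCoeff := by
      rw [leadingCoeff_add_of_degree_lt' hlt, leadingCoeff_mul]
    have hFne : f * f' + g * g' * E ≠ 0 := by
      apply leadingCoeff_ne_zero.mp
      rw [lcF]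
      exact mul_ne_zero (leadingCoeff_ne_zero.mpr hf) (leadingCoeff_ne_zero.mpr hf')
    have hFnd : (f * f' + g * g' * E).natDegree = f.natDegree + f'.natDegree := by
      rw [natDegree_eq_of_degree_eq (degree_add_eq_left_of_degree_lt hlt),
        natDegree_mul hf hf']
    have hGcond : f * g' + g * f' - g * g' * L = 0 ∨
        3 + 2 * (f * g' + g * f' - g * g' * L).natDegree <
          2 * (f * f' + g * g' * E).natDegree := by
      rcases eq_or_ne (f * g' + g * f' - g * g' * L) 0 with h0 | h0
      · exact Or.inl h0
      refine Or.inr ?_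
      have hb := key3 (p := f * g') (q := g * f') (r := g * g' * L)
        (M := f.natDegree + f'.natDegree) ?_ ?_ ?_ h0
      · omega
      · intro h
        have hg'ne : g' ≠ 0 := right_ne_zero_of_mul h
        rw [natDegree_mul hf hg'ne]
        have := Hg'.resolve_left hg'ne; omega
      · intro h
        have hgne : g ≠ 0 := left_ne_zero_of_mul h
        rw [natDegree_mul hgne hf']
        have := Hg.resolve_left hgne; omega
      · intro h
        have hgne : g ≠ 0 := left_ne_zero_of_mul (left_ne_zero_of_mul h)
        have hg'ne : g' ≠ 0 := right_ne_zero_of_mul (left_ne_zero_of_mul h)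
        have hLne : L ≠ 0 := right_ne_zero_of_mul h
        rw [natDegree_mul (mul_ne_zero hgne hg'ne) hLne, natDegree_mul hgne hg'ne]
        have h1 := Hg.resolve_left hgne
        have h2 := Hg'.resolve_left hg'ne
        omega
    rw [ecSgn_left hGcond, lcF, ecSgn_left Hg, ecSgn_left Hg']
  · -- EO case: (f,g) even dominant, (f',g') odd dominant
    have hfg'ne : f * g' ≠ 0 := mul_ne_zero hf hg'
    have hlt1 : (g * f').degree < (f * g').degree := by
      apply deg_lt' hfg'ne
      intro h
      have hgne : g ≠ 0 := left_ne_zero_of_mul h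
      have hf'ne : f' ≠ 0 := right_ne_zero_of_mul h
      rw [natDegree_mul hgne hf'ne, natDegree_mul hf hg']
      have := Hg.resolve_left hgne
      omega
    have hlt2 : (g * g' * L).degree < (f * g').degree := by
      apply deg_lt' hfg'ne
      intro h
      have hgne : g ≠ 0 := left_ne_zero_of_mul (left_ne_zero_of_mul h)
      have hLne : L ≠ 0 := right_ne_zero_of_mul h
      rw [natDegree_mul (mul_ne_zero hgne hg') hLne, natDegree_mul hgne hg',
        natDegree_mul hf hg']
      have := Hg.resolve_left hgne
      omega
    obtain ⟨lcG, degG⟩ := lc3_left hlt1 hlt2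
    have hGne : f * g' + g * f' - g * g' * L ≠ 0 := by
      apply leadingCoeff_ne_zero.mp
      rw [lcG]
      exact leadingCoeff_ne_zero.mpr hfg'ne
    have hGnd : (f * g' + g * f' - g * g' * L).natDegree = f.natDegree + g'.natDegree := by
      rw [natDegree_eq_of_degree_eq degG, natDegree_mul hf hg']
    have hFle : (f * f' + g * g' * E).natDegree ≤ f.natDegree + g'.natDegree + 1 := by
      apply key2
      · intro h
        have hf'ne : f' ≠ 0 := right_ne_zero_of_mul h
        rw [natDegree_mul hf hf'ne]
        omega
      · intro h
        have hgne : g ≠ 0 := left_ne_zero_of_mul (left_ne_zero_of_mul h)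
        rw [natDegree_mul (mul_ne_zero hgne hg') hEne, natDegree_mul hgne hg', hEnd]
        have := Hg.resolve_left hgne
        omega
    rw [ecSgn_right hGne (by omega), lcG, leadingCoeff_mul,
      ecSgn_left Hg, ecSgn_right hg' (by omega)]
  · -- OE case: (f,g) odd dominant, (f',g') even dominant
    have hgf'ne : g * f' ≠ 0 := mul_ne_zero hg hf'
    have hlt1 : (f * g').degree < (g * f').degree := by
      apply deg_lt' hgf'ne
      intro h
      have hfne : f ≠ 0 := left_ne_zero_of_mul h
      have hg'ne : g' ≠ 0 := right_ne_zero_of_mul h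
      rw [natDegree_mul hfne hg'ne, natDegree_mul hg hf']
      have := Hg'.resolve_left hg'ne
      omega
    have hlt2 : (g * g' * L).degree < (g * f').degree := by
      apply deg_lt' hgf'ne
      intro h
      have hg'ne : g' ≠ 0 := right_ne_zero_of_mul (left_ne_zero_of_mul h)
      have hLne : L ≠ 0 := right_ne_zero_of_mul h
      rw [natDegree_mul (mul_ne_zero hg hg'ne) hLne, natDegree_mul hg hg'ne,
        natDegree_mul hg hf']
      have := Hg'.resolve_left hg'ne
      omega
    obtain ⟨lcG, degG⟩ := lc3_mid hlt1 hlt2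
    have hGne : f * g' + g * f' - g * g' * L ≠ 0 := by
      apply leadingCoeff_ne_zero.mp
      rw [lcG]
      exact leadingCoeff_ne_zero.mpr hgf'ne
    have hGnd : (f * g' + g * f' - g * g' * L).natDegree = g.natDegree + f'.natDegree := by
      rw [natDegree_eq_of_degree_eq degG, natDegree_mul hg hf']
    have hFle : (f * f' + g * g' * E).natDegree ≤ g.natDegree + f'.natDegree + 1 := by
      apply key2
      · intro h
        have hfne : f ≠ 0 := left_ne_zero_of_mul h
        rw [natDegree_mul hfne hf']
        omega
      · intro h
        have hg'ne : g' ≠ 0 := right_ne_zero_of_mul (left_ne_zero_of_mul h)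
        rw [natDegree_mul (mul_ne_zero hg hg'ne) hEne, natDegree_mul hg hg'ne, hEnd]
        have := Hg'.resolve_left hg'ne
        omega
    rw [ecSgn_right hGne (by omega), lcG, leadingCoeff_mul,
      ecSgn_right hg (by omega), ecSgn_left Hg', mul_comm]
  · -- OO case
    have hgg'E : g * g' * E ≠ 0 := mul_ne_zero (mul_ne_zero hg hg') hEne
    have hlt : (f * f').degree < (g * g' * E).degree := by
      apply deg_lt' hgg'E
      intro h
      have hfne : f ≠ 0 := left_ne_zero_of_mul h
      have hf'ne : f' ≠ 0 := right_ne_zero_of_mul h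
      rw [natDegree_mul hfne hf'ne, natDegree_mul (mul_ne_zero hg hg') hEne,
        natDegree_mul hg hg', hEnd]
      omega
    have lcF : (f * f' + g * g' * E).leadingCoeff = g.leadingCoeff * g'.leadingCoeff := by
      rw [leadingCoeff_add_of_degree_lt hlt, leadingCoeff_mul, leadingCoeff_mul,
        hEm.leadingCoeff, mul_one]
    have hFne : f * f' + g * g' * E ≠ 0 := by
      apply leadingCoeff_ne_zero.mp
      rw [lcF]
      exact mul_ne_zero (leadingCoeff_ne_zero.mpr hg) (leadingCoeff_ne_zero.mpr hg')
    have hFnd : (f * f' + g * g' * E).natDegree = g.natDegree + g'.natDegree + 3 := by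
      rw [natDegree_eq_of_degree_eq (degree_add_eq_right_of_degree_lt hlt),
        natDegree_mul (mul_ne_zero hg hg') hEne, natDegree_mul hg hg', hEnd]
    have hGcond : f * g' + g * f' - g * g' * L = 0 ∨
        3 + 2 * (f * g' + g * f' - g * g' * L).natDegree <
          2 * (f * f' + g * g' * E).natDegree := by
      rcases eq_or_ne (f * g' + g * f' - g * g' * L) 0 with h0 | h0
      · exact Or.inl h0
      refine Or.inr ?_
      have hb := key3 (p := f * g') (q := g * f') (r := g * g' * L)
        (M := g.natDegree + g'.natDegree + 3) ?_ ?_ ?_ h0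
      · omega
      · intro h
        have hfne : f ≠ 0 := left_ne_zero_of_mul h
        rw [natDegree_mul hfne hg']
        omega
      · intro h
        have hf'ne : f' ≠ 0 := right_ne_zero_of_mul h
        rw [natDegree_mul hg hf'ne]
        omega
      · intro h
        have hLne : L ≠ 0 := right_ne_zero_of_mul h
        rw [natDegree_mul (mul_ne_zero hg hg') hLne, natDegree_mul hg hg']
        omega
    rw [ecSgn_left hGcond, lcF, ecSgn_right hg (by omega), ecSgn_right hg' (by omega)]
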